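/- arXiv:2512.22729 — 2 statements merged into one kernel-verified Lean document; each statement's English description precedes it below -/
import Mathlib

section
/- Let k ≥ 2, let G = (V, E) be a finite directed graph with at least one edge and no isolated vertices, let χ : V → {1,…,k} be a proper coloring of G, let α > 0, and let pos : V → [0,1] be the fractional assignment defined by the recursive rule pos(v) = clamp( (y_out(v) + Σ_{(v,u) ∈ E_out^lo(v)} (1 − pos(u)) − Σ_{(u,v) ∈ E_in^lo(v)} pos(u)) / (y_in(v) + y_out(v)) ). Then (1/2 − α) · maxval(G) ≤ val(G, pos) ≤ maxval(G). -/
open scoped BigOperators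

/-- `clamp x = max(0, min(1, x))`. -/
noncomputable def clamp (x : ℝ) : ℝ := max 0 (min 1 x)

/-- The (fractional) directed-cut value:
`val(G, f) = (1/|E|) * Σ_{(u,v) ∈ E} f(u) * (1 - f(v))`. -/
noncomputable def dival {V : Type*} (E : Multiset (V × V)) (f : V → ℝ) : ℝ :=
  (1 / (E.card : ℝ)) * (E.map (fun e => f e.1 * (1 - f e.2))).sum

/-- Incoming edges of `v` from lower-colored vertices. -/
def EinLo {V : Type*} [DecidableEq V] (E : Multiset (V × V)) (χ : V → ℕ) (v : V) :
    Multiset (V × V) := E.filter (fun e => e.2 = v ∧ χ e.1 < χ v)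

/-- Outgoing edges of `v` to lower-colored vertices. -/
def EoutLo {V : Type*} [DecidableEq V] (E : Multiset (V × V)) (χ : V → ℕ) (v : V) :
    Multiset (V × V) := E.filter (fun e => e.1 = v ∧ χ e.2 < χ v)

/-- Incoming edges of `v` from higher-colored vertices. -/
def EinHi {V : Type*} [DecidableEq V] (E : Multiset (V × V)) (χ : V → ℕ) (v : V) :
    Multiset (V × V) := E.filter (fun e => e.2 = v ∧ χ v < χ e.1)

/-- Outgoing edges of `v` to higher-colored vertices. -/
def EoutHi {V : Type*} [DecidableEq V] (E : Multiset (V × V)) (χ : V → ℕ) (v : V) :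
    Multiset (V × V) := E.filter (fun e => e.1 = v ∧ χ v < χ e.2)

/-- `y_in(v) = max(|E_in^hi(v)|, α·|E_in^lo(v)|)`. -/
noncomputable def yIn {V : Type*} [DecidableEq V] (E : Multiset (V × V)) (χ : V → ℕ)
    (α : ℝ) (v : V) : ℝ :=
  max ((EinHi E χ v).card : ℝ) (α * ((EinLo E χ v).card : ℝ))

/-- `y_out(v) = max(|E_out^hi(v)|, α·|E_out^lo(v)|)`. -/
noncomputable def yOut {V : Type*} [DecidableEq V] (E : Multiset (V × V)) (χ : V → ℕ)
    (α : ℝ) (v : V) : ℝ :=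
  max ((EoutHi E χ v).card : ℝ) (α * ((EoutLo E χ v).card : ℝ))

/-- `maxval(G)`: the maximum (as a supremum, which is attained since `V` is finite)
of `val(G, g)` over Boolean assignments `g : V → {0,1}`. -/
noncomputable def maxval {V : Type*} (E : Multiset (V × V)) : ℝ :=
  sSup {x : ℝ | ∃ g : V → ℝ, (∀ v, g v = 0 ∨ g v = 1) ∧ x = dival E g}

set_option linter.unusedVariables false
set_option linter.unusedSectionVars false
set_option maxHeartbeats 1000000


lemma clamp_key (z : ℝ) : 0 ≤ clamp z ∧ clamp z ≤ 1 ∧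
    0 ≤ clamp z * (z - clamp z) ∧ (1 - clamp z) * (z - clamp z) ≤ 0 := by
  unfold clamp
  rcases le_total z 0 with h | h
  · rw [min_eq_right (by linarith), max_eq_left h]
    refine ⟨le_refl _, by norm_num, by simp, by nlinarith⟩
  · rcases le_total 1 z with h1 | h1
    · rw [min_eq_left h1, max_eq_right (by norm_num)]
      exact ⟨by norm_num, le_refl _, by nlinarith, by simp⟩
    · rw [min_eq_right h1, max_eq_right h]
      exact ⟨h, h1, by simp, by simp⟩

lemma fiber_sum {V β : Type*} [Fintype V] [DecidableEq V] (F : Multiset β)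
    (key : β → V) (ψ : β → ℝ) :
    ∑ v : V, ((F.filter (fun e => key e = v)).map ψ).sum = (F.map ψ).sum := by
  induction F using Multiset.induction_on with
  | empty => simp
  | cons a F ih =>
    have h : ∀ v : V, ((a ::ₘ F).filter (fun e => key e = v)).map ψ =
        (if key a = v then ({a} : Multiset β) else 0).map ψ + (F.filter (fun e => key e = v)).map ψ := by
      intro v; rw [Multiset.filter_cons, Multiset.map_add]
    simp only [h, Multiset.sum_add, Finset.sum_add_distrib, ih]
    have : ∀ v : V, ((if key a = v then ({a} : Multiset β) else 0).map ψ).sum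
        = if key a = v then ψ a else 0 := by
      intro v; split <;> simp
    simp only [this, Finset.sum_ite_eq, Finset.mem_univ, if_true, Multiset.map_cons,
      Multiset.sum_cons]
noncomputable def wS (α : ℝ) : ℝ := (1 - α)/2
noncomputable def wT (α : ℝ) : ℝ := (1 + α)/4
noncomputable def cI (α p gv : ℝ) : ℝ := p * (p - wT α - wS α * gv)
noncomputable def cO (α p gv : ℝ) : ℝ := (1 - p) * (wT α + wS α * gv - p)


lemma maxsplit (α HiR LiR C : ℝ) (hα : 0 < α) (hHi : 0 ≤ HiR) (hLi : 0 ≤ LiR) :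
    HiR * C + α * LiR * min C 0 ≤ max HiR (α*LiR) * C := by
  rcases le_or_gt 0 C with hC | hC
  · rw [min_eq_right hC]
    have := mul_le_mul_of_nonneg_right (le_max_left HiR (α*LiR)) hC
    linarith
  · rw [min_eq_left hC.le]
    have hle : max HiR (α*LiR) ≤ HiR + α*LiR :=
      max_le (le_add_of_nonneg_right (mul_nonneg hα.le hLi)) (le_add_of_nonneg_left hHi)
    have := mul_le_mul_of_nonpos_right hle hC.le
    nlinarith

lemma vertex_ineq (α SA SB HiR LiR HoR LoR gv p : ℝ)
    (hα : 0 < α) (hα2 : α < 1/2)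
    (hg : gv = 0 ∨ gv = 1)
    (hHi : 0 ≤ HiR) (hLi : 0 ≤ LiR) (hHo : 0 ≤ HoR) (hLo : 0 ≤ LoR)
    (hD : 0 < max HiR (α*LiR) + max HoR (α*LoR))
    (hp : p = clamp ((max HoR (α*LoR) + SB - SA)/(max HiR (α*LiR) + max HoR (α*LoR)))) :
    (wS α * (1-gv) + wT α) * SA + (wS α * gv + wT α) * SB
      + HiR * cI α p gv + α * LiR * min (cI α p gv) 0
      + HoR * cO α p gv + α * LoR * min (cO α p gv) 0
    ≤ SA * (1-p) + SB * p := by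
  set Mi := max HiR (α*LiR) with hMi
  set Mo := max HoR (α*LoR) with hMo
  set D := Mi + Mo with hDdef
  set z := (Mo + SB - SA)/D with hz
  obtain ⟨hp0, hp1, hk1, hk2⟩ := clamp_key z
  rw [← hp] at hp0 hp1 hk1 hk2
  have hDz : D * z = Mo + SB - SA := by
    rw [hz]; field_simp
  set Δ := Mo*(1-p) - Mi*p - SA + SB with hΔdef
  have hΔ : Δ = D*(z - p) := by
    have h' : D*(z-p) = D*z - D*p := by ring
    rw [hΔdef, h', hDz, hDdef]; ring
  have h1 : 0 ≤ p * Δ := by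
    rw [hΔ]
    have h' : p * (D * (z - p)) = D * (p * (z - p)) := by ring
    rw [h']; exact mul_nonneg hD.le hk1
  have h2 : (1-p) * Δ ≤ 0 := by
    rw [hΔ]
    have h' : (1-p) * (D * (z - p)) = D * ((1-p) * (z - p)) := by ring
    rw [h']; exact mul_nonpos_of_nonneg_of_nonpos hD.le hk2
  have hst1 : 0 < wS α + wT α := by unfold wS wT; linarith
  have hst2 : 0 < wT α := by unfold wT; linarith
  -- step 1: mixed-form inequality with Mi, Mo
  have step1 : (wS α * (1-gv) + wT α) * SA + (wS α * gv + wT α) * SB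
      + Mi * cI α p gv + Mo * cO α p gv ≤ SA * (1-p) + SB * p := by
    rcases hg with hg | hg <;> subst hg
    · have key : SA * (1-p) + SB * p -
          ((wS α * (1-(0:ℝ)) + wT α) * SA + (wS α * 0 + wT α) * SB
            + Mi * cI α p 0 + Mo * cO α p 0)
          = (wS α + wT α) * (p * Δ) - wT α * ((1-p) * Δ) := by
        rw [hΔdef]; unfold cI cO wS wT; ring
      nlinarith [mul_nonneg hst1.le h1, mul_nonpos_of_nonneg_of_nonpos hst2.le h2]
    · have key : SA * (1-p) + SB * p -
          ((wS α * (1-(1:ℝ)) + wT α) * SA + (wS α * 1 + wT α) * SB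
            + Mi * cI α p 1 + Mo * cO α p 1)
          = wT α * (p * Δ) - (wS α + wT α) * ((1-p) * Δ) := by
        rw [hΔdef]; unfold cI cO wS wT; ring
      nlinarith [mul_nonneg hst2.le h1, mul_nonpos_of_nonneg_of_nonpos hst1.le h2]
  have m1 := maxsplit α HiR LiR (cI α p gv) hα hHi hLi
  have m2 := maxsplit α HoR LoR (cO α p gv) hα hHo hLo
  rw [← hMi] at m1
  rw [← hMo] at m2
  linarith
lemma minI0 (α q : ℝ) (hα : 0 < α) : -(((1+α)/4)^2/4) ≤ min (cI α q 0) 0 := by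
  rcases le_or_gt (cI α q 0) 0 with h|h
  · rw [min_eq_left h]; unfold cI wT wS; nlinarith [sq_nonneg (2*q - (1+α)/4)]
  · rw [min_eq_right h.le]; nlinarith [sq_nonneg ((1+α)/4)]

lemma minI1 (α q : ℝ) (hα : 0 < α) : -(((3-α)/4)^2/4) ≤ min (cI α q 1) 0 := by
  rcases le_or_gt (cI α q 1) 0 with h|h
  · rw [min_eq_left h]; unfold cI wT wS; nlinarith [sq_nonneg (2*q - (3-α)/4)]
  · rw [min_eq_right h.le]; nlinarith [sq_nonneg ((3-α)/4)]

lemma minO0 (α p : ℝ) (hα : 0 < α) : -(((3-α)/4)^2/4) ≤ min (cO α p 0) 0 := by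
  rcases le_or_gt (cO α p 0) 0 with h|h
  · rw [min_eq_left h]; unfold cO wT wS; nlinarith [sq_nonneg (1 + (1+α)/4 - 2*p)]
  · rw [min_eq_right h.le]; nlinarith [sq_nonneg ((3-α)/4)]

lemma minO1 (α p : ℝ) (hα : 0 < α) : -(((1+α)/4)^2/4) ≤ min (cO α p 1) 0 := by
  rcases le_or_gt (cO α p 1) 0 with h|h
  · rw [min_eq_left h]; unfold cO wT wS; nlinarith [sq_nonneg (1 + (3-α)/4 - 2*p)]
  · rw [min_eq_right h.le]; nlinarith [sq_nonneg ((1+α)/4)]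


lemma edgeA (α p q gx gy : ℝ) (hα : 0 < α) (hα2 : α < 1/2)
    (hp0 : 0 ≤ p) (hp1 : p ≤ 1) (hq0 : 0 ≤ q) (hq1 : q ≤ 1)
    (hgx : gx = 0 ∨ gx = 1) (hgy : gy = 0 ∨ gy = 1) :
    (1/2 - α) * (gx * (1 - gy)) ≤
      (wS α * (1 - gy) + wT α) * p + cO α p gx + α * min (cI α q gy) 0 := by
  have ha1 : α*α ≤ α/2 := by nlinarith
  have ha2 : α*α*α ≤ α/4 := by nlinarith
  rcases hgx with h|h <;> subst h <;> rcases hgy with h|h <;> subst h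
  · have hm := mul_le_mul_of_nonneg_left (minI0 α q hα) hα.le
    unfold cO wT wS; nlinarith [sq_nonneg (4*p - 1 - α), ha1, ha2]
  · have hm := mul_le_mul_of_nonneg_left (minI1 α q hα) hα.le
    unfold cO wT wS; nlinarith [sq_nonneg (2*p - 1), ha1, ha2]
  · have hm := mul_le_mul_of_nonneg_left (minI0 α q hα) hα.le
    unfold cO wT wS; nlinarith [sq_nonneg (2*p - 1), ha1, ha2]
  · have hm := mul_le_mul_of_nonneg_left (minI1 α q hα) hα.le
    unfold cO wT wS; nlinarith [sq_nonneg (4*p - 3 + α), ha1, ha2]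

lemma edgeB (α p q gx gy : ℝ) (hα : 0 < α) (hα2 : α < 1/2)
    (hp0 : 0 ≤ p) (hp1 : p ≤ 1) (hq0 : 0 ≤ q) (hq1 : q ≤ 1)
    (hgx : gx = 0 ∨ gx = 1) (hgy : gy = 0 ∨ gy = 1) :
    (1/2 - α) * (gx * (1 - gy)) ≤
      (wS α * gx + wT α) * (1 - q) + cI α q gy + α * min (cO α p gx) 0 := by
  have ha1 : α*α ≤ α/2 := by nlinarith
  have ha2 : α*α*α ≤ α/4 := by nlinarith
  rcases hgx with h|h <;> subst h <;> rcases hgy with h|h <;> subst h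
  · have hm := mul_le_mul_of_nonneg_left (minO0 α p hα) hα.le
    unfold cI wT wS; nlinarith [sq_nonneg (4*q - 1 - α), ha1, ha2]
  · have hm := mul_le_mul_of_nonneg_left (minO0 α p hα) hα.le
    unfold cI wT wS; nlinarith [sq_nonneg (2*q - 1), ha1, ha2]
  · have hm := mul_le_mul_of_nonneg_left (minO1 α p hα) hα.le
    unfold cI wT wS; nlinarith [sq_nonneg (2*q - 1), ha1, ha2]
  · have hm := mul_le_mul_of_nonneg_left (minO1 α p hα) hα.le
    unfold cI wT wS; nlinarith [sq_nonneg (4*q - 3 + α), ha1, ha2]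
lemma sum_map_const' {β : Type*} (s : Multiset β) (c : ℝ) :
    (s.map (fun _ => c)).sum = (Multiset.card s : ℝ) * c := by
  rw [Multiset.map_const', Multiset.sum_replicate, nsmul_eq_mul]

lemma card_pos_real {β : Type*} (s : Multiset β) (e : β) (he : e ∈ s) :
    (1 : ℝ) ≤ (Multiset.card s : ℝ) := by
  have : 0 < Multiset.card s := Multiset.card_pos_iff_exists_mem.2 ⟨e, he⟩
  exact_mod_cast this

section Core
variable {V : Type*} [Fintype V] [DecidableEq V]

lemma einlo_eq (E : Multiset (V × V)) (χ : V → ℕ) (v : V) :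
    EinLo E χ v = (E.filter (fun e => χ e.1 < χ e.2)).filter (fun e => e.2 = v) := by
  rw [Multiset.filter_filter]
  exact Multiset.filter_congr (fun e _ => by
    constructor
    · rintro ⟨h1, h2⟩; rw [← h1] at h2; exact ⟨h1, h2⟩
    · rintro ⟨h1, h2⟩; rw [h1] at h2; exact ⟨h1, h2⟩)

lemma eouthi_eq (E : Multiset (V × V)) (χ : V → ℕ) (v : V) :
    EoutHi E χ v = (E.filter (fun e => χ e.1 < χ e.2)).filter (fun e => e.1 = v) := by
  rw [Multiset.filter_filter]
  exact Multiset.filter_congr (fun e _ => by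
    constructor
    · rintro ⟨h1, h2⟩; rw [← h1] at h2; exact ⟨h1, h2⟩
    · rintro ⟨h1, h2⟩; rw [h1] at h2; exact ⟨h1, h2⟩)

lemma eoutlo_eq (E : Multiset (V × V)) (χ : V → ℕ) (v : V) :
    EoutLo E χ v = (E.filter (fun e => χ e.2 < χ e.1)).filter (fun e => e.1 = v) := by
  rw [Multiset.filter_filter]
  exact Multiset.filter_congr (fun e _ => by
    constructor
    · rintro ⟨h1, h2⟩; rw [← h1] at h2; exact ⟨h1, h2⟩
    · rintro ⟨h1, h2⟩; rw [h1] at h2; exact ⟨h1, h2⟩)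

lemma einhi_eq (E : Multiset (V × V)) (χ : V → ℕ) (v : V) :
    EinHi E χ v = (E.filter (fun e => χ e.2 < χ e.1)).filter (fun e => e.2 = v) := by
  rw [Multiset.filter_filter]
  exact Multiset.filter_congr (fun e _ => by
    constructor
    · rintro ⟨h1, h2⟩; rw [← h1] at h2; exact ⟨h1, h2⟩
    · rintro ⟨h1, h2⟩; rw [h1] at h2; exact ⟨h1, h2⟩)

lemma partition_sum (E : Multiset (V × V)) (χ : V → ℕ)
    (hproper : ∀ e ∈ E, χ e.1 ≠ χ e.2) (f : V × V → ℝ) :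
    ((E.filter (fun e => χ e.1 < χ e.2)).map f).sum
      + ((E.filter (fun e => χ e.2 < χ e.1)).map f).sum = (E.map f).sum := by
  have h : E.filter (fun e => χ e.2 < χ e.1)
      = E.filter (fun e => ¬ (χ e.1 < χ e.2)) := by
    refine Multiset.filter_congr (fun e he => ?_)
    have := hproper e he
    omega
  rw [h, ← Multiset.sum_add, ← Multiset.map_add, Multiset.filter_add_not]

lemma core_ineq (E : Multiset (V × V)) (χ : V → ℕ)
    (hnoiso : ∀ v : V, ∃ e ∈ E, e.1 = v ∨ e.2 = v)
    (hproper : ∀ e ∈ E, χ e.1 ≠ χ e.2)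
    (α : ℝ) (hα : 0 < α) (hα2 : α < 1/2)
    (pos : V → ℝ)
    (hpos : ∀ v, pos v = clamp ((yOut E χ α v
        + ((EoutLo E χ v).map (fun e => 1 - pos e.2)).sum
        - ((EinLo E χ v).map (fun e => pos e.1)).sum)
        / (yIn E χ α v + yOut E χ α v)))
    (g : V → ℝ) (hg : ∀ v, g v = 0 ∨ g v = 1) :
    (1/2 - α) * (E.map (fun e => g e.1 * (1 - g e.2))).sum
      ≤ (E.map (fun e => pos e.1 * (1 - pos e.2))).sum := by
  have hrange : ∀ v, 0 ≤ pos v ∧ pos v ≤ 1 := fun v => by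
    rw [hpos v]; exact ⟨(clamp_key _).1, (clamp_key _).2.1⟩
  set val : V × V → ℝ := fun e => pos e.1 * (1 - pos e.2) with hval
  set tgt : V × V → ℝ := fun e => (1/2 - α) * (g e.1 * (1 - g e.2)) with htgt
  set ψ1 : V × V → ℝ := fun e =>
    (wS α * (1 - g e.2) + wT α) * pos e.1 + α * min (cI α (pos e.2) (g e.2)) 0 with hψ1
  set ψ2 : V × V → ℝ := fun e =>
    (wS α * g e.1 + wT α) * (1 - pos e.2) + α * min (cO α (pos e.1) (g e.1)) 0 with hψ2
  set ψ3 : V × V → ℝ := fun e => cI α (pos e.2) (g e.2) with hψ3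
  set ψ4 : V × V → ℝ := fun e => cO α (pos e.1) (g e.1) with hψ4
  have hvertex : ∀ v : V,
      ((EinLo E χ v).map ψ1).sum + ((EoutLo E χ v).map ψ2).sum
        + ((EinHi E χ v).map ψ3).sum + ((EoutHi E χ v).map ψ4).sum
      ≤ ((EinLo E χ v).map val).sum + ((EoutLo E χ v).map val).sum := by
    intro v
    set SAv := ((EinLo E χ v).map (fun e => pos e.1)).sum with hSAv
    set SBv := ((EoutLo E χ v).map (fun e => 1 - pos e.2)).sum with hSBv
    set LiR := (Multiset.card (EinLo E χ v) : ℝ) with hLiR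
    set LoR := (Multiset.card (EoutLo E χ v) : ℝ) with hLoR
    set HiR := (Multiset.card (EinHi E χ v) : ℝ) with hHiR
    set HoR := (Multiset.card (EoutHi E χ v) : ℝ) with hHoR
    have hmem_inlo : ∀ e ∈ EinLo E χ v, e.2 = v := by
      intro e he; exact (Multiset.of_mem_filter he).1
    have hmem_outlo : ∀ e ∈ EoutLo E χ v, e.1 = v := by
      intro e he; exact (Multiset.of_mem_filter he).1
    have hmem_inhi : ∀ e ∈ EinHi E χ v, e.2 = v := by
      intro e he; exact (Multiset.of_mem_filter he).1
    have hmem_outhi : ∀ e ∈ EoutHi E χ v, e.1 = v := by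
      intro e he; exact (Multiset.of_mem_filter he).1
    have h1 : ((EinLo E χ v).map ψ1).sum
        = (wS α * (1 - g v) + wT α) * SAv + α * LiR * min (cI α (pos v) (g v)) 0 := by
      have heq : (EinLo E χ v).map ψ1 = (EinLo E χ v).map (fun e =>
          (wS α * (1 - g v) + wT α) * pos e.1 + α * min (cI α (pos v) (g v)) 0) :=
        Multiset.map_congr rfl (fun e he => by rw [hψ1]; simp only; rw [hmem_inlo e he])
      rw [heq, Multiset.sum_map_add, Multiset.sum_map_mul_left, sum_map_const']
      rw [hSAv, hLiR]; ring
    have h2 : ((EoutLo E χ v).map ψ2).sum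
        = (wS α * g v + wT α) * SBv + α * LoR * min (cO α (pos v) (g v)) 0 := by
      have heq : (EoutLo E χ v).map ψ2 = (EoutLo E χ v).map (fun e =>
          (wS α * g v + wT α) * (1 - pos e.2) + α * min (cO α (pos v) (g v)) 0) :=
        Multiset.map_congr rfl (fun e he => by rw [hψ2]; simp only; rw [hmem_outlo e he])
      rw [heq, Multiset.sum_map_add, Multiset.sum_map_mul_left, sum_map_const']
      rw [hSBv, hLoR]; ring
    have h3 : ((EinHi E χ v).map ψ3).sum = HiR * cI α (pos v) (g v) := by
      have heq : (EinHi E χ v).map ψ3 = (EinHi E χ v).map (fun _ => cI α (pos v) (g v)) :=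
        Multiset.map_congr rfl (fun e he => by rw [hψ3]; simp only; rw [hmem_inhi e he])
      rw [heq, sum_map_const', hHiR]
    have h4 : ((EoutHi E χ v).map ψ4).sum = HoR * cO α (pos v) (g v) := by
      have heq : (EoutHi E χ v).map ψ4 = (EoutHi E χ v).map (fun _ => cO α (pos v) (g v)) :=
        Multiset.map_congr rfl (fun e he => by rw [hψ4]; simp only; rw [hmem_outhi e he])
      rw [heq, sum_map_const', hHoR]
    have hL1 : ((EinLo E χ v).map val).sum = SAv * (1 - pos v) := by
      have heq : (EinLo E χ v).map val = (EinLo E χ v).map (fun e => pos e.1 * (1 - pos v)) :=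
        Multiset.map_congr rfl (fun e he => by rw [hval]; simp only; rw [hmem_inlo e he])
      rw [heq, Multiset.sum_map_mul_right, hSAv]
    have hL2 : ((EoutLo E χ v).map val).sum = pos v * SBv := by
      have heq : (EoutLo E χ v).map val = (EoutLo E χ v).map (fun e => pos v * (1 - pos e.2)) :=
        Multiset.map_congr rfl (fun e he => by rw [hval]; simp only; rw [hmem_outlo e he])
      rw [heq, Multiset.sum_map_mul_left, hSBv]
    have hHi0 : (0:ℝ) ≤ HiR := by rw [hHiR]; positivity
    have hLi0 : (0:ℝ) ≤ LiR := by rw [hLiR]; positivity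
    have hHo0 : (0:ℝ) ≤ HoR := by rw [hHoR]; positivity
    have hLo0 : (0:ℝ) ≤ LoR := by rw [hLoR]; positivity
    have hD : 0 < max HiR (α*LiR) + max HoR (α*LoR) := by
      have m1 : HiR ≤ max HiR (α*LiR) := le_max_left _ _
      have m2 : α*LiR ≤ max HiR (α*LiR) := le_max_right _ _
      have m3 : HoR ≤ max HoR (α*LoR) := le_max_left _ _
      have m4 : α*LoR ≤ max HoR (α*LoR) := le_max_right _ _
      have n1 : (0:ℝ) ≤ max HiR (α*LiR) := le_trans hHi0 m1
      have n2 : (0:ℝ) ≤ max HoR (α*LoR) := le_trans hHo0 m3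
      obtain ⟨e, he, hor⟩ := hnoiso v
      have hne := hproper e he
      rcases hor with h | h
      · rcases Nat.lt_or_ge (χ e.1) (χ e.2) with hlt | hge
        · have hmem : e ∈ EoutHi E χ v := by
            rw [EoutHi]; exact Multiset.mem_filter.2 ⟨he, h, by rw [← h]; exact hlt⟩
          have hc : (1:ℝ) ≤ HoR := by rw [hHoR]; exact card_pos_real _ e hmem
          linarith
        · have hlt : χ e.2 < χ e.1 := by omega
          have hmem : e ∈ EoutLo E χ v := by
            rw [EoutLo]; exact Multiset.mem_filter.2 ⟨he, h, by rw [← h]; exact hlt⟩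
          have hc : (1:ℝ) ≤ LoR := by rw [hLoR]; exact card_pos_real _ e hmem
          have : α * 1 ≤ α * LoR := mul_le_mul_of_nonneg_left hc hα.le
          rw [mul_one] at this
          linarith
      · rcases Nat.lt_or_ge (χ e.1) (χ e.2) with hlt | hge
        · have hmem : e ∈ EinLo E χ v := by
            rw [EinLo]; exact Multiset.mem_filter.2 ⟨he, h, by rw [← h]; exact hlt⟩
          have hc : (1:ℝ) ≤ LiR := by rw [hLiR]; exact card_pos_real _ e hmem
          have : α * 1 ≤ α * LiR := mul_le_mul_of_nonneg_left hc hα.le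
          rw [mul_one] at this
          linarith
        · have hlt : χ e.2 < χ e.1 := by omega
          have hmem : e ∈ EinHi E χ v := by
            rw [EinHi]; exact Multiset.mem_filter.2 ⟨he, h, by rw [← h]; exact hlt⟩
          have hc : (1:ℝ) ≤ HiR := by rw [hHiR]; exact card_pos_real _ e hmem
          linarith
    have hp : pos v
        = clamp ((max HoR (α*LoR) + SBv - SAv)/(max HiR (α*LiR) + max HoR (α*LoR))) := by
      have hh := hpos v
      rw [yIn, yOut] at hh
      rw [hSAv, hSBv, hHiR, hHoR, hLiR, hLoR]
      exact hh
    have key := vertex_ineq α SAv SBv HiR LiR HoR LoR (g v) (pos v)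
      hα hα2 (hg v) hHi0 hLi0 hHo0 hLo0 hD hp
    rw [h1, h2, h3, h4, hL1, hL2]
    linarith
  have hsum : ∑ v : V, (((EinLo E χ v).map ψ1).sum + ((EoutLo E χ v).map ψ2).sum
        + ((EinHi E χ v).map ψ3).sum + ((EoutHi E χ v).map ψ4).sum)
      ≤ ∑ v : V, (((EinLo E χ v).map val).sum + ((EoutLo E χ v).map val).sum) :=
    Finset.sum_le_sum (fun v _ => hvertex v)
  set QA := fun e : V × V => χ e.1 < χ e.2 with hQA
  set QB := fun e : V × V => χ e.2 < χ e.1 with hQB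
  have hfib1 : ∑ v : V, ((EinLo E χ v).map ψ1).sum = ((E.filter QA).map ψ1).sum := by
    simp_rw [einlo_eq E χ]; exact fiber_sum _ _ _
  have hfib2 : ∑ v : V, ((EoutLo E χ v).map ψ2).sum = ((E.filter QB).map ψ2).sum := by
    simp_rw [eoutlo_eq E χ]; exact fiber_sum _ _ _
  have hfib3 : ∑ v : V, ((EinHi E χ v).map ψ3).sum = ((E.filter QB).map ψ3).sum := by
    simp_rw [einhi_eq E χ]; exact fiber_sum _ _ _
  have hfib4 : ∑ v : V, ((EoutHi E χ v).map ψ4).sum = ((E.filter QA).map ψ4).sum := by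
    simp_rw [eouthi_eq E χ]; exact fiber_sum _ _ _
  have hfibL1 : ∑ v : V, ((EinLo E χ v).map val).sum = ((E.filter QA).map val).sum := by
    simp_rw [einlo_eq E χ]; exact fiber_sum _ _ _
  have hfibL2 : ∑ v : V, ((EoutLo E χ v).map val).sum = ((E.filter QB).map val).sum := by
    simp_rw [eoutlo_eq E χ]; exact fiber_sum _ _ _
  have hedgeA : ((E.filter QA).map tgt).sum
      ≤ ((E.filter QA).map (fun e => ψ1 e + ψ4 e)).sum := by
    refine Multiset.sum_map_le_sum_map _ _ (fun e he => ?_)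
    rw [htgt, hψ1, hψ4]
    simp only
    have := edgeA α (pos e.1) (pos e.2) (g e.1) (g e.2) hα hα2
      (hrange e.1).1 (hrange e.1).2 (hrange e.2).1 (hrange e.2).2 (hg e.1) (hg e.2)
    linarith
  have hedgeB : ((E.filter QB).map tgt).sum
      ≤ ((E.filter QB).map (fun e => ψ2 e + ψ3 e)).sum := by
    refine Multiset.sum_map_le_sum_map _ _ (fun e he => ?_)
    rw [htgt, hψ2, hψ3]
    simp only
    have := edgeB α (pos e.1) (pos e.2) (g e.1) (g e.2) hα hα2
      (hrange e.1).1 (hrange e.1).2 (hrange e.2).1 (hrange e.2).2 (hg e.1) (hg e.2)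
    linarith
  have hsplitA : ((E.filter QA).map (fun e => ψ1 e + ψ4 e)).sum
      = ((E.filter QA).map ψ1).sum + ((E.filter QA).map ψ4).sum := by
    rw [← Multiset.sum_map_add]
  have hsplitB : ((E.filter QB).map (fun e => ψ2 e + ψ3 e)).sum
      = ((E.filter QB).map ψ2).sum + ((E.filter QB).map ψ3).sum := by
    rw [← Multiset.sum_map_add]
  have hpart_tgt := partition_sum E χ hproper tgt
  have hpart_val := partition_sum E χ hproper val
  have htgt_sum : (E.map tgt).sum
      = (1/2 - α) * (E.map (fun e => g e.1 * (1 - g e.2))).sum := by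
    rw [htgt, ← Multiset.sum_map_mul_left]
  have hfinal : (E.map tgt).sum ≤ (E.map val).sum := by
    rw [← hpart_tgt, ← hpart_val]
    calc ((E.filter QA).map tgt).sum + ((E.filter QB).map tgt).sum
        ≤ ((E.filter QA).map (fun e => ψ1 e + ψ4 e)).sum
          + ((E.filter QB).map (fun e => ψ2 e + ψ3 e)).sum := add_le_add hedgeA hedgeB
      _ = ((E.filter QA).map ψ1).sum + ((E.filter QB).map ψ2).sum
          + ((E.filter QB).map ψ3).sum + ((E.filter QA).map ψ4).sum := by
            rw [hsplitA, hsplitB]; ring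
      _ = ∑ v : V, (((EinLo E χ v).map ψ1).sum + ((EoutLo E χ v).map ψ2).sum
          + ((EinHi E χ v).map ψ3).sum + ((EoutHi E χ v).map ψ4).sum) := by
            rw [Finset.sum_add_distrib, Finset.sum_add_distrib, Finset.sum_add_distrib,
              hfib1, hfib2, hfib3, hfib4]
      _ ≤ ∑ v : V, (((EinLo E χ v).map val).sum + ((EoutLo E χ v).map val).sum) := hsum
      _ = ((E.filter QA).map val).sum + ((E.filter QB).map val).sum := by
            rw [Finset.sum_add_distrib, hfibL1, hfibL2]
  rw [← htgt_sum]
  exact hfinal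

end Core
section Endgame
variable {V : Type*} [Fintype V] [DecidableEq V]

lemma sum_update (E : Multiset (V × V)) (hpr : ∀ e ∈ E, e.1 ≠ e.2) (f : V → ℝ) (v : V) :
    (E.map (fun e => f e.1 * (1 - f e.2))).sum
      = (1 - f v) * (E.map (fun e =>
          (Function.update f v 0) e.1 * (1 - (Function.update f v 0) e.2))).sum
        + f v * (E.map (fun e =>
          (Function.update f v 1) e.1 * (1 - (Function.update f v 1) e.2))).sum := by
  have heq : E.map (fun e => f e.1 * (1 - f e.2))
      = E.map (fun e =>
          (1 - f v) * ((Function.update f v 0) e.1 * (1 - (Function.update f v 0) e.2))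
          + f v * ((Function.update f v 1) e.1 * (1 - (Function.update f v 1) e.2))) := by
    refine Multiset.map_congr rfl (fun e he => ?_)
    have hne := hpr e he
    by_cases h1 : e.1 = v
    · have h2 : ¬ (e.2 = v) := fun h2 => hne (h1.trans h2.symm)
      simp only [Function.update_apply, h1, h2, if_true, if_false]
      ring
    · by_cases h2 : e.2 = v
      · simp only [Function.update_apply, h1, h2, if_true, if_false]
        ring
      · simp only [Function.update_apply, h1, h2, if_false]
        ring
  rw [heq, Multiset.sum_map_add, Multiset.sum_map_mul_left, Multiset.sum_map_mul_left]

lemma round_up (E : Multiset (V × V)) (hpr : ∀ e ∈ E, e.1 ≠ e.2) :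
    ∀ (n : ℕ) (f : V → ℝ), (∀ v, 0 ≤ f v ∧ f v ≤ 1) →
      (Finset.univ.filter (fun v => f v ≠ 0 ∧ f v ≠ 1)).card ≤ n →
      ∃ g : V → ℝ, (∀ v, g v = 0 ∨ g v = 1) ∧
        (E.map (fun e => f e.1 * (1 - f e.2))).sum
          ≤ (E.map (fun e => g e.1 * (1 - g e.2))).sum := by
  intro n
  induction n with
  | zero =>
    intro f hf hcard
    refine ⟨f, fun v => ?_, le_refl _⟩
    by_contra hcon
    push_neg at hcon
    have : v ∈ Finset.univ.filter (fun v => f v ≠ 0 ∧ f v ≠ 1) :=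
      Finset.mem_filter.2 ⟨Finset.mem_univ v, hcon.1, hcon.2⟩
    have := Finset.card_pos.2 ⟨v, this⟩
    omega
  | succ n ih =>
    intro f hf hcard
    by_cases hall : ∀ v, f v = 0 ∨ f v = 1
    · exact ⟨f, hall, le_refl _⟩
    · push_neg at hall
      obtain ⟨v, hv0, hv1⟩ := hall
      have hvmem : v ∈ Finset.univ.filter (fun v => f v ≠ 0 ∧ f v ≠ 1) :=
        Finset.mem_filter.2 ⟨Finset.mem_univ v, hv0, hv1⟩
      have hsub : ∀ (a : ℝ), (a = 0 ∨ a = 1) →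
          (Finset.univ.filter (fun w => Function.update f v a w ≠ 0
              ∧ Function.update f v a w ≠ 1)).card ≤ n := by
        intro a ha
        have hsubset : Finset.univ.filter (fun w => Function.update f v a w ≠ 0
              ∧ Function.update f v a w ≠ 1)
            ⊆ (Finset.univ.filter (fun v => f v ≠ 0 ∧ f v ≠ 1)).erase v := by
          intro w hw
          obtain ⟨-, hw1, hw2⟩ := Finset.mem_filter.1 hw
          by_cases hwv : w = v
          · subst hwv
            rw [Function.update_self] at hw1 hw2
            rcases ha with ha | ha
            · exact absurd ha hw1
            · exact absurd ha hw2
          · rw [Function.update_of_ne hwv] at hw1 hw2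
            exact Finset.mem_erase.2 ⟨hwv, Finset.mem_filter.2 ⟨Finset.mem_univ w, hw1, hw2⟩⟩
        have := Finset.card_le_card hsubset
        rw [Finset.card_erase_of_mem hvmem] at this
        omega
      have hr : ∀ (a : ℝ), (0 ≤ a ∧ a ≤ 1) →
          ∀ w, 0 ≤ Function.update f v a w ∧ Function.update f v a w ≤ 1 := by
        intro a ha w
        by_cases hwv : w = v
        · subst hwv; rw [Function.update_self]; exact ha
        · rw [Function.update_of_ne hwv]; exact hf w
      obtain ⟨g0, hg0b, hg0⟩ := ih (Function.update f v 0)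
        (hr 0 ⟨le_refl _, by norm_num⟩) (hsub 0 (Or.inl rfl))
      obtain ⟨g1, hg1b, hg1⟩ := ih (Function.update f v 1)
        (hr 1 ⟨by norm_num, le_refl _⟩) (hsub 1 (Or.inr rfl))
      have hid := sum_update E hpr f v
      have hc := hf v
      rcases le_total
        ((E.map (fun e => (Function.update f v 0) e.1 * (1 - (Function.update f v 0) e.2))).sum)
        ((E.map (fun e => (Function.update f v 1) e.1 * (1 - (Function.update f v 1) e.2))).sum)
        with hle | hle
      · refine ⟨g1, hg1b, ?_⟩
        have : (E.map (fun e => f e.1 * (1 - f e.2))).sum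
            ≤ (E.map (fun e =>
              (Function.update f v 1) e.1 * (1 - (Function.update f v 1) e.2))).sum := by
          rw [hid]; nlinarith
        linarith
      · refine ⟨g0, hg0b, ?_⟩
        have : (E.map (fun e => f e.1 * (1 - f e.2))).sum
            ≤ (E.map (fun e =>
              (Function.update f v 0) e.1 * (1 - (Function.update f v 0) e.2))).sum := by
          rw [hid]; nlinarith
        linarith

end Endgame

/-- Let `k ≥ 2`, `G = (V, E)` a finite directed graph with at least one edge and no
isolated vertices, `χ` a proper coloring with colors in `{1,…,k}`, `α > 0`, and let
`pos` satisfy the recursive rule of Algorithm 1. Then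
`(1/2 − α)·maxval(G) ≤ val(G, pos) ≤ maxval(G)`. -/
theorem stmt3 {V : Type*} [Fintype V] [DecidableEq V] (k : ℕ) (hk : 2 ≤ k)
    (E : Multiset (V × V)) (hE : E ≠ 0)
    (hnoiso : ∀ v : V, ∃ e ∈ E, e.1 = v ∨ e.2 = v)
    (χ : V → ℕ) (hχrange : ∀ v, χ v ∈ Finset.Icc 1 k)
    (hproper : ∀ e ∈ E, χ e.1 ≠ χ e.2)
    (α : ℝ) (hα : 0 < α)
    (pos : V → ℝ)
    (hpos : ∀ v, pos v = clamp ((yOut E χ α v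
        + ((EoutLo E χ v).map (fun e => 1 - pos e.2)).sum
        - ((EinLo E χ v).map (fun e => pos e.1)).sum)
        / (yIn E χ α v + yOut E χ α v))) :
    (1 / 2 - α) * maxval E ≤ dival E pos ∧ dival E pos ≤ maxval E := by
  -- basic facts
  have hα2cases := lt_or_ge α (1/2 : ℝ)
  have hrange : ∀ v, 0 ≤ pos v ∧ pos v ≤ 1 := fun v => by
    rw [hpos v]; exact ⟨(clamp_key _).1, (clamp_key _).2.1⟩
  have hpr : ∀ e ∈ E, e.1 ≠ e.2 := fun e he h => hproper e he (by rw [h])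
  have hm : (0:ℝ) < (Multiset.card E : ℝ) := by
    have : 0 < Multiset.card E := Multiset.card_pos.2 hE
    exact_mod_cast this
  have hminv : (0:ℝ) ≤ 1 / (Multiset.card E : ℝ) := by positivity
  have hsumpos : (0:ℝ) ≤ (E.map (fun e => pos e.1 * (1 - pos e.2))).sum := by
    refine Multiset.sum_nonneg (fun x hx => ?_)
    obtain ⟨e, he, rfl⟩ := Multiset.mem_map.1 hx
    have h1 := hrange e.1
    have h2 := hrange e.2
    nlinarith [h1.1, h1.2, h2.1, h2.2]
  have hdppos : 0 ≤ dival E pos := by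
    rw [dival]; exact mul_nonneg hminv hsumpos
  set S := {x : ℝ | ∃ g : V → ℝ, (∀ v, g v = 0 ∨ g v = 1) ∧ x = dival E g} with hSdef
  have h0S : (0:ℝ) ∈ S := by
    refine ⟨fun _ => 0, fun v => Or.inl rfl, ?_⟩
    rw [dival]
    have : (E.map (fun e => (fun _ => (0:ℝ)) e.1 * (1 - (fun _ => (0:ℝ)) e.2))).sum = 0 := by
      simp
    rw [this, mul_zero]
  have hub : ∀ x ∈ S, x ≤ 1 := by
    rintro x ⟨g, hgb, rfl⟩
    rw [dival]
    have hb : (E.map (fun e => g e.1 * (1 - g e.2))).sum ≤ (Multiset.card E : ℝ) := by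
      have := Multiset.sum_le_card_nsmul (E.map (fun e => g e.1 * (1 - g e.2))) 1
        (by
          intro x hx
          obtain ⟨e, he, rfl⟩ := Multiset.mem_map.1 hx
          rcases hgb e.1 with h1 | h1 <;> rcases hgb e.2 with h2 | h2 <;>
            rw [h1, h2] <;> norm_num)
      rw [Multiset.card_map] at this
      calc (E.map (fun e => g e.1 * (1 - g e.2))).sum
          ≤ (Multiset.card E) • (1:ℝ) := this
        _ = (Multiset.card E : ℝ) := by rw [nsmul_eq_mul, mul_one]
    rw [div_mul_eq_mul_div, one_mul, div_le_one hm]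
    exact hb
  have hbdd : BddAbove S := ⟨1, fun x hx => hub x hx⟩
  have hSne : S.Nonempty := ⟨0, h0S⟩
  constructor
  · -- lower bound
    rcases hα2cases with hα2 | hα2
    · -- α < 1/2 : use core inequality
      have key : ∀ x ∈ S, (1/2 - α) * x ≤ dival E pos := by
        rintro x ⟨g, hgb, rfl⟩
        have hcore := core_ineq E χ hnoiso hproper α hα hα2 pos hpos g hgb
        rw [dival, dival]
        calc (1/2 - α) * (1 / (Multiset.card E : ℝ)
              * (E.map (fun e => g e.1 * (1 - g e.2))).sum)
            = 1 / (Multiset.card E : ℝ)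
              * ((1/2 - α) * (E.map (fun e => g e.1 * (1 - g e.2))).sum) := by ring
          _ ≤ 1 / (Multiset.card E : ℝ)
              * (E.map (fun e => pos e.1 * (1 - pos e.2))).sum :=
              mul_le_mul_of_nonneg_left hcore hminv
      have hc : (0:ℝ) < 1/2 - α := by linarith
      have hsup : sSup S ≤ dival E pos / (1/2 - α) := by
        refine csSup_le hSne (fun x hx => ?_)
        rw [le_div_iff₀ hc]
        have := key x hx
        linarith
      have := mul_le_mul_of_nonneg_left hsup hc.le
      rw [mul_div_cancel₀ _ (ne_of_gt hc)] at this
      rw [maxval]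
      exact this
    · -- 1/2 ≤ α : trivial
      have hmx : 0 ≤ sSup S := le_csSup hbdd h0S
      have : (1/2 - α) * sSup S ≤ 0 :=
        mul_nonpos_of_nonpos_of_nonneg (by linarith) hmx
      rw [maxval]
      linarith
  · -- upper bound via rounding
    obtain ⟨g, hgb, hge⟩ := round_up E hpr
      (Finset.univ.filter (fun v => pos v ≠ 0 ∧ pos v ≠ 1)).card pos hrange (le_refl _)
    have h1 : dival E pos ≤ dival E g := by
      rw [dival, dival]
      exact mul_le_mul_of_nonneg_left hge hminv
    have h2 : dival E g ≤ sSup S := le_csSup hbdd ⟨g, hgb, rfl⟩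
    rw [maxval]
    linarith
end

section
/- Fix ε ∈ (0, 0.01], an integer n, and set k = ⌈1/ε²⌉, α = ε⁴, δ₀ = ε^(4^(k+1)), q = 2^(−(k+1)). Let G = (V, E) be a finite directed graph on at most n vertices with proper k-coloring χ and no isolated vertices, and let pos be the fractional assignment defined by Algorithm 1 with parameter α. Let v be a vertex with d(v) ≥ n^(2q) satisfying: (A2) d⁻(v) ≥ ε²·d(v) and d⁺(v) ≥ ε²·d(v); and (A3) for every color a ≠ χ(v), |d_a⁻(v) − d⁻(v)/(k−1)| ≤ δ₀·d(v)/(k−1) and |d_a⁺(v) − d⁺(v)/(k−1)| ≤ δ₀·d(v)/(k−1). Then |pos(v) − tpos(v)| ≤ 3·δ₀·k², where tpos(v) = clamp( ((α+1)/α)·(d⁺(v)/d(v)) − z̄(v)/α ) if χ(v) = k, and tpos(v) = clamp( ((k−1)/(k−χ(v)))·(d⁺(v)/d(v)) − ((χ(v)−1)/(k−χ(v)))·z̄(v) ) if χ(v) ≠ k. -/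
open scoped BigOperators

lemma clamp_nonneg (x : ℝ) : 0 ≤ clamp x := le_max_left _ _
lemma clamp_le_one (x : ℝ) : clamp x ≤ 1 := max_le zero_le_one (min_le_left _ _)
lemma clamp_lip (a b : ℝ) : |clamp a - clamp b| ≤ |a - b| := by
  have h1 : |min 1 a - min 1 b| ≤ max |(1:ℝ) - 1| |a - b| := abs_min_sub_min_le_max 1 a 1 b
  have h2 : |max (min 1 a) 0 - max (min 1 b) 0| ≤ |min 1 a - min 1 b| :=
    abs_max_sub_max_le_abs _ _ _
  have e1 : clamp a = max (min 1 a) 0 := max_comm _ _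
  have e2 : clamp b = max (min 1 b) 0 := max_comm _ _
  rw [e1, e2]
  simp only [sub_self, abs_zero] at h1
  calc |max (min 1 a) 0 - max (min 1 b) 0| ≤ |min 1 a - min 1 b| := h2
    _ ≤ max 0 |a - b| := h1
    _ = |a - b| := max_eq_right (abs_nonneg _)

lemma card_filter_split {β : Type*} (s : Multiset β) (p : β → Prop) [DecidablePred p]
    (f : β → ℕ) (c : ℕ) :
    (s.filter (fun e => p e ∧ f e < c)).card
      = ∑ a ∈ Finset.range c, (s.filter (fun e => p e ∧ f e = a)).card := by
  simp only [← Multiset.countP_eq_card_filter]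
  induction s using Multiset.induction_on with
  | empty => simp
  | cons x s ih =>
    simp only [Multiset.countP_cons, Finset.sum_add_distrib, ← ih]
    congr 1
    by_cases hp : p x
    · simp only [hp, true_and]
      by_cases hfc : f x < c
      · rw [if_pos hfc, Finset.sum_ite_eq (Finset.range c) (f x) (fun _ => 1)]
        simp [hfc]
      · rw [if_neg hfc, Finset.sum_eq_zero]
        intro a ha
        simp only [Finset.mem_range] at ha
        rw [if_neg]; omega
    · simp [hp]

lemma card_filter_tri {β : Type*} (s : Multiset β) (p : β → Prop) [DecidablePred p]
    (f : β → ℕ) (c : ℕ) (h : ∀ e ∈ s, p e → f e ≠ c) :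
    (s.filter (fun e => p e ∧ f e < c)).card + (s.filter (fun e => p e ∧ c < f e)).card
      = (s.filter p).card := by
  simp only [← Multiset.countP_eq_card_filter]
  induction s using Multiset.induction_on with
  | empty => simp
  | cons x s ih =>
    have hx := h x (Multiset.mem_cons_self x s)
    have ih' := ih (fun e he => h e (Multiset.mem_cons_of_mem he))
    simp only [Multiset.countP_cons]
    by_cases hp : p x
    · have : f x ≠ c := hx hp
      rcases lt_or_gt_of_ne this with hlt | hgt
      · simp [hp, hlt, not_lt_of_gt hlt, ih']; omega
      · simp [hp, hgt, not_lt_of_gt hgt, ih']; omega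
    · simp [hp, ih']

lemma sum_map_one_sub {β : Type*} (s : Multiset β) (f : β → ℝ) :
    ((s.map fun a => 1 - f a)).sum = (s.card : ℝ) - (s.map f).sum := by
  induction s using Multiset.induction_on with
  | empty => simp
  | cons x s ih => simp [ih]; push_cast; ring

lemma sum_map_nonneg {β : Type*} (s : Multiset β) (f : β → ℝ) (h : ∀ a ∈ s, 0 ≤ f a) :
    0 ≤ (s.map f).sum := by
  apply Multiset.sum_nonneg
  intro x hx
  obtain ⟨a, ha, rfl⟩ := Multiset.mem_map.1 hx
  exact h a ha

lemma sum_map_le_card {β : Type*} (s : Multiset β) (f : β → ℝ) (h : ∀ a ∈ s, f a ≤ 1) :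
    (s.map f).sum ≤ (s.card : ℝ) := by
  have := Multiset.sum_map_le_sum_map f (fun _ => (1:ℝ)) h
  simpa using this
/-- In-degree of `v`. -/
def dIn {V : Type*} [DecidableEq V] (E : Multiset (V × V)) (v : V) : ℕ :=
  (E.filter (fun e => e.2 = v)).card

/-- Out-degree of `v`. -/
def dOut {V : Type*} [DecidableEq V] (E : Multiset (V × V)) (v : V) : ℕ :=
  (E.filter (fun e => e.1 = v)).card

/-- Total degree of `v`. -/
def dTot {V : Type*} [DecidableEq V] (E : Multiset (V × V)) (v : V) : ℕ :=
  dIn E v + dOut E v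

/-- Number of incoming edges of `v` whose other endpoint has color `a`. -/
def dInC {V : Type*} [DecidableEq V] (E : Multiset (V × V)) (χ : V → ℕ) (v : V) (a : ℕ) : ℕ :=
  (E.filter (fun e => e.2 = v ∧ χ e.1 = a)).card

/-- Number of outgoing edges of `v` whose other endpoint has color `a`. -/
def dOutC {V : Type*} [DecidableEq V] (E : Multiset (V × V)) (χ : V → ℕ) (v : V) (a : ℕ) : ℕ :=
  (E.filter (fun e => e.1 = v ∧ χ e.2 = a)).card

/-- `z̄(v)`: the average of `pos(u)` over the lower-colored neighbors `u` of `v`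
(counted with edge multiplicity over `E_in^lo(v)` and `E_out^lo(v)`), defined to be
`0` if `v` has no lower-colored neighbor. -/
noncomputable def zbar {V : Type*} [DecidableEq V] (E : Multiset (V × V)) (χ : V → ℕ)
    (pos : V → ℝ) (v : V) : ℝ :=
  if (EinLo E χ v).card + (EoutLo E χ v).card = 0 then 0
  else (((EinLo E χ v).map (fun e => pos e.1)).sum
      + ((EoutLo E χ v).map (fun e => pos e.2)).sum)
    / (((EinLo E χ v).card + (EoutLo E χ v).card : ℕ) : ℝ)

/-- The estimate `tpos(v)` for the position of a high-degree vertex `v`. -/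
noncomputable def tpos {V : Type*} [DecidableEq V] (E : Multiset (V × V)) (χ : V → ℕ)
    (pos : V → ℝ) (k : ℕ) (α : ℝ) (v : V) : ℝ :=
  if χ v = k then
    clamp (((α + 1) / α) * ((dOut E v : ℝ) / (dTot E v : ℝ)) - zbar E χ pos v / α)
  else
    clamp ((((k : ℝ) - 1) / ((k : ℝ) - (χ v : ℝ))) * ((dOut E v : ℝ) / (dTot E v : ℝ))
      - (((χ v : ℝ) - 1) / ((k : ℝ) - (χ v : ℝ))) * zbar E χ pos v)

lemma harg_aux (α di do' S T : ℝ) (hα : α ≠ 0) (hd : di + do' ≠ 0) :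
    (α * do' + (do' - T) - S) / (α * di + α * do')
      = (α + 1) / α * (do' / (di + do')) - (S + T) / (di + do') / α := by
  have h2 : α * di + α * do' = α * (di + do') := by ring
  rw [h2]
  field_simp
  ring


lemma tpos_aux (K c z do' D : ℝ) (hKc : c + 1 ≤ K) (hK1 : 1 < K) (hD : 0 < D) :
    (K - 1) / (K - c) * (do' / D) - (c - 1) / (K - c) * z
      = (do' - ((c - 1)/(K - 1)) * z * D) / (((K - c)/(K - 1)) * D) := by
  have h1 : K - c ≠ 0 := by linarith
  have h2 : K - 1 ≠ 0 := by linarith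
  field_simp

lemma frac_aux (N Ns Dn Ds : ℝ) (h1 : Dn ≠ 0) (h2 : Ds ≠ 0) :
    N / Dn - Ns / Ds = (N - Ns)/Dn + Ns*(Ds - Dn)/(Dn*Ds) := by
  field_simp
  ring

set_option maxHeartbeats 1000000 in
/-- Fix `ε ∈ (0, 0.01]`, an integer `n`, `k = ⌈1/ε²⌉`, `α = ε⁴`, `δ₀ = ε^(4^(k+1))`,
`q = 2^(−(k+1))`. For a finite directed graph on at most `n` vertices with a proper
`k`-coloring, no isolated vertices, and `pos` defined by Algorithm 1 with parameter `α`: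
if `v` is a vertex with `d(v) ≥ n^(2q)` satisfying (A2) and (A3), then
`|pos(v) − tpos(v)| ≤ 3·δ₀·k²`. -/
theorem stmt4 {V : Type*} [Fintype V] [DecidableEq V]
    (ε : ℝ) (hε0 : 0 < ε) (hε1 : ε ≤ 0.01) (n : ℕ)
    (k : ℕ) (hk : k = ⌈1 / ε ^ 2⌉₊)
    (α δ₀ q : ℝ) (hα : α = ε ^ 4) (hδ₀ : δ₀ = ε ^ (4 ^ (k + 1)))
    (hq : q = (2 : ℝ) ^ (-((k : ℝ) + 1)))
    (E : Multiset (V × V)) (hV : Fintype.card V ≤ n)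
    (hnoiso : ∀ v : V, ∃ e ∈ E, e.1 = v ∨ e.2 = v)
    (χ : V → ℕ) (hχrange : ∀ v, χ v ∈ Finset.Icc 1 k)
    (hproper : ∀ e ∈ E, χ e.1 ≠ χ e.2)
    (pos : V → ℝ)
    (hpos : ∀ v, pos v = clamp ((yOut E χ α v
        + ((EoutLo E χ v).map (fun e => 1 - pos e.2)).sum
        - ((EinLo E χ v).map (fun e => pos e.1)).sum)
        / (yIn E χ α v + yOut E χ α v)))
    (v : V) (hdeg : ((n : ℝ)) ^ (2 * q) ≤ (dTot E v : ℝ))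
    (hA2in : ε ^ 2 * (dTot E v : ℝ) ≤ (dIn E v : ℝ))
    (hA2out : ε ^ 2 * (dTot E v : ℝ) ≤ (dOut E v : ℝ))
    (hA3 : ∀ a ∈ Finset.Icc 1 k, a ≠ χ v →
      |(dInC E χ v a : ℝ) - (dIn E v : ℝ) / ((k : ℝ) - 1)| ≤ δ₀ * (dTot E v : ℝ) / ((k : ℝ) - 1) ∧
      |(dOutC E χ v a : ℝ) - (dOut E v : ℝ) / ((k : ℝ) - 1)| ≤ δ₀ * (dTot E v : ℝ) / ((k : ℝ) - 1)) :
    |pos v - tpos E χ pos k α v| ≤ 3 * δ₀ * (k : ℝ) ^ 2 := by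
  classical
  -- basic numeric facts
  have hεle1 : ε ≤ 1 := hε1.trans (by norm_num)
  have hε2pos : (0:ℝ) < ε^2 := by positivity
  have hkge : (1:ℝ)/ε^2 ≤ (k:ℝ) := by rw [hk]; exact_mod_cast Nat.le_ceil _
  have hklt : (k:ℝ) < 1/ε^2 + 1 := by
    rw [hk]; exact_mod_cast Nat.ceil_lt_add_one (by positivity : (0:ℝ) ≤ 1/ε^2)
  have hK4 : (10000:ℝ) ≤ (k:ℝ) := by
    have h1 : (10000:ℝ) ≤ 1/ε^2 := by
      rw [le_div_iff₀ hε2pos]; nlinarith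
    linarith
  have hk1 : 1 ≤ k := by exact_mod_cast (by linarith : (1:ℝ) ≤ (k:ℝ))
  have hδpos : 0 < δ₀ := by rw [hδ₀]; positivity
  have hδ16 : δ₀ ≤ ε^16 := by
    rw [hδ₀]
    apply pow_le_pow_of_le_one hε0.le hεle1
    calc (16:ℕ) = 4^2 := by norm_num
      _ ≤ 4^(k+1) := Nat.pow_le_pow_right (by norm_num) (by omega)
  have hαpos : 0 < α := by rw [hα]; positivity
  have hεkm1 : ε^2 * ((k:ℝ) - 1) ≤ 1 := by
    have : (k:ℝ) - 1 < 1/ε^2 := by linarith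
    calc ε^2 * ((k:ℝ)-1) ≤ ε^2 * (1/ε^2) := by nlinarith
      _ = 1 := by field_simp
  have hKm1pos : (0:ℝ) < (k:ℝ) - 1 := by linarith
  -- pos is in [0,1]
  have hpos01 : ∀ u, 0 ≤ pos u ∧ pos u ≤ 1 := fun u => by
    rw [hpos u]; exact ⟨clamp_nonneg _, clamp_le_one _⟩
  -- degree ≥ 1
  have hn1 : 1 ≤ n := le_trans (@Fintype.card_pos V _ ⟨v⟩) hV
  have hD1 : (1:ℝ) ≤ (dTot E v : ℝ) := by
    refine le_trans ?_ hdeg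
    have hn1' : (1:ℝ) ≤ (n:ℝ) := by exact_mod_cast hn1
    have hq0 : 0 ≤ 2*q := by rw [hq]; positivity
    calc (1:ℝ) = (1:ℝ) ^ (2*q) := (Real.one_rpow _).symm
      _ ≤ (n:ℝ) ^ (2*q) := Real.rpow_le_rpow (by norm_num) hn1' hq0
  have hDpos : (0:ℝ) < (dTot E v : ℝ) := by linarith
  have hDsum : (dTot E v : ℝ) = (dIn E v : ℝ) + (dOut E v : ℝ) := by
    rw [dTot]; push_cast; ring
  have hdin0 : (0:ℝ) ≤ (dIn E v : ℝ) := Nat.cast_nonneg _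
  have hdout0 : (0:ℝ) ≤ (dOut E v : ℝ) := Nat.cast_nonneg _
  obtain ⟨hc1, hck⟩ := Finset.mem_Icc.1 (hχrange v)
  -- counting identities
  have htri_in : (EinLo E χ v).card + (EinHi E χ v).card = dIn E v := by
    have h := card_filter_tri E (fun e => e.2 = v) (fun e => χ e.1) (χ v)
      (fun e he hp => by have h2 := hproper e he; rw [hp] at h2; exact h2)
    exact h
  have htri_out : (EoutLo E χ v).card + (EoutHi E χ v).card = dOut E v := by
    have h := card_filter_tri E (fun e => e.1 = v) (fun e => χ e.2) (χ v)
      (fun e he hp => by have h2 := hproper e he; rw [hp] at h2; exact fun hc => h2 hc.symm)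
    exact h
  have hsplit_in : (EinLo E χ v).card = ∑ a ∈ Finset.range (χ v), dInC E χ v a :=
    card_filter_split E (fun e => e.2 = v) (fun e => χ e.1) (χ v)
  have hsplit_out : (EoutLo E χ v).card = ∑ a ∈ Finset.range (χ v), dOutC E χ v a :=
    card_filter_split E (fun e => e.1 = v) (fun e => χ e.2) (χ v)
  have hrange : Finset.range (χ v) = insert 0 (Finset.Ico 1 (χ v)) := by
    ext x; simp only [Finset.mem_range, Finset.mem_insert, Finset.mem_Ico]; omega
  have h0notin : (0:ℕ) ∉ Finset.Ico 1 (χ v) := by simp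
  have hdInC0 : dInC E χ v 0 = 0 := by
    rw [dInC, Multiset.card_eq_zero, Multiset.filter_eq_nil]
    rintro e he ⟨-, h0⟩
    have := Finset.mem_Icc.1 (hχrange e.1)
    omega
  have hdOutC0 : dOutC E χ v 0 = 0 := by
    rw [dOutC, Multiset.card_eq_zero, Multiset.filter_eq_nil]
    rintro e he ⟨-, h0⟩
    have := Finset.mem_Icc.1 (hχrange e.2)
    omega
  have hcard_Ico : ((Finset.Ico 1 (χ v)).card : ℝ) = (χ v : ℝ) - 1 := by
    rw [Nat.card_Ico]
    push_cast [Nat.cast_sub hc1]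
    ring
  -- the main low-count estimates
  have hLi : |((EinLo E χ v).card : ℝ) - (((χ v:ℝ)-1)/((k:ℝ)-1)) * (dIn E v : ℝ)|
      ≤ δ₀ * (dTot E v : ℝ) := by
    have hLi0 : ((EinLo E χ v).card : ℝ) = ∑ a ∈ Finset.Ico 1 (χ v), (dInC E χ v a : ℝ) := by
      rw [hsplit_in, hrange, Finset.sum_insert h0notin, hdInC0]
      push_cast; ring
    have hsum : ((EinLo E χ v).card : ℝ) - (((χ v:ℝ)-1)/((k:ℝ)-1)) * (dIn E v : ℝ)
        = ∑ a ∈ Finset.Ico 1 (χ v), ((dInC E χ v a : ℝ) - (dIn E v : ℝ)/((k:ℝ)-1)) := by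
      rw [Finset.sum_sub_distrib, ← hLi0, Finset.sum_const, nsmul_eq_mul, hcard_Ico]
      field_simp
    rw [hsum]
    calc |∑ a ∈ Finset.Ico 1 (χ v), ((dInC E χ v a : ℝ) - (dIn E v : ℝ)/((k:ℝ)-1))|
        ≤ ∑ a ∈ Finset.Ico 1 (χ v), |(dInC E χ v a : ℝ) - (dIn E v : ℝ)/((k:ℝ)-1)| :=
          Finset.abs_sum_le_sum_abs _ _
      _ ≤ ∑ a ∈ Finset.Ico 1 (χ v), (δ₀ * (dTot E v : ℝ)/((k:ℝ)-1)) := by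
          apply Finset.sum_le_sum
          intro a ha
          obtain ⟨h1a, hac⟩ := Finset.mem_Ico.1 ha
          exact (hA3 a (Finset.mem_Icc.2 ⟨h1a, le_trans hac.le hck⟩) (by omega)).1
      _ = ((χ v:ℝ)-1) * (δ₀ * (dTot E v : ℝ)/((k:ℝ)-1)) := by
          rw [Finset.sum_const, nsmul_eq_mul, hcard_Ico]
      _ ≤ ((k:ℝ)-1) * (δ₀ * (dTot E v : ℝ)/((k:ℝ)-1)) := by
          apply mul_le_mul_of_nonneg_right
          · have : (χ v : ℝ) ≤ (k:ℝ) := by exact_mod_cast hck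
            linarith
          · positivity
      _ = δ₀ * (dTot E v : ℝ) := by field_simp
  have hLo : |((EoutLo E χ v).card : ℝ) - (((χ v:ℝ)-1)/((k:ℝ)-1)) * (dOut E v : ℝ)|
      ≤ δ₀ * (dTot E v : ℝ) := by
    have hLo0 : ((EoutLo E χ v).card : ℝ) = ∑ a ∈ Finset.Ico 1 (χ v), (dOutC E χ v a : ℝ) := by
      rw [hsplit_out, hrange, Finset.sum_insert h0notin, hdOutC0]
      push_cast; ring
    have hsum : ((EoutLo E χ v).card : ℝ) - (((χ v:ℝ)-1)/((k:ℝ)-1)) * (dOut E v : ℝ)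
        = ∑ a ∈ Finset.Ico 1 (χ v), ((dOutC E χ v a : ℝ) - (dOut E v : ℝ)/((k:ℝ)-1)) := by
      rw [Finset.sum_sub_distrib, ← hLo0, Finset.sum_const, nsmul_eq_mul, hcard_Ico]
      field_simp
    rw [hsum]
    calc |∑ a ∈ Finset.Ico 1 (χ v), ((dOutC E χ v a : ℝ) - (dOut E v : ℝ)/((k:ℝ)-1))|
        ≤ ∑ a ∈ Finset.Ico 1 (χ v), |(dOutC E χ v a : ℝ) - (dOut E v : ℝ)/((k:ℝ)-1)| :=
          Finset.abs_sum_le_sum_abs _ _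
      _ ≤ ∑ a ∈ Finset.Ico 1 (χ v), (δ₀ * (dTot E v : ℝ)/((k:ℝ)-1)) := by
          apply Finset.sum_le_sum
          intro a ha
          obtain ⟨h1a, hac⟩ := Finset.mem_Ico.1 ha
          exact (hA3 a (Finset.mem_Icc.2 ⟨h1a, le_trans hac.le hck⟩) (by omega)).2
      _ = ((χ v:ℝ)-1) * (δ₀ * (dTot E v : ℝ)/((k:ℝ)-1)) := by
          rw [Finset.sum_const, nsmul_eq_mul, hcard_Ico]
      _ ≤ ((k:ℝ)-1) * (δ₀ * (dTot E v : ℝ)/((k:ℝ)-1)) := by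
          apply mul_le_mul_of_nonneg_right
          · have : (χ v : ℝ) ≤ (k:ℝ) := by exact_mod_cast hck
            linarith
          · positivity
      _ = δ₀ * (dTot E v : ℝ) := by field_simp
  -- cast identities
  have hcin : ((EinLo E χ v).card : ℝ) + ((EinHi E χ v).card : ℝ) = (dIn E v : ℝ) := by
    exact_mod_cast congrArg (Nat.cast : ℕ → ℝ) htri_in
  have hcout : ((EoutLo E χ v).card : ℝ) + ((EoutHi E χ v).card : ℝ) = (dOut E v : ℝ) := by
    exact_mod_cast congrArg (Nat.cast : ℕ → ℝ) htri_out
  have hβγ : (((χ v:ℝ)-1)/((k:ℝ)-1)) + (((k:ℝ)-(χ v:ℝ))/((k:ℝ)-1)) = 1 := by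
    field_simp
    ring
  have hHi : |((EinHi E χ v).card : ℝ) - (((k:ℝ)-(χ v:ℝ))/((k:ℝ)-1)) * (dIn E v : ℝ)|
      ≤ δ₀ * (dTot E v : ℝ) := by
    have : ((EinHi E χ v).card : ℝ) - (((k:ℝ)-(χ v:ℝ))/((k:ℝ)-1)) * (dIn E v : ℝ)
        = -(((EinLo E χ v).card : ℝ) - (((χ v:ℝ)-1)/((k:ℝ)-1)) * (dIn E v : ℝ)) := by
      have h2 : ((EinHi E χ v).card : ℝ) = (dIn E v : ℝ) - ((EinLo E χ v).card : ℝ) := by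
        linarith
      rw [h2]
      linear_combination (-(dIn E v : ℝ)) * hβγ
    rw [this, abs_neg]
    exact hLi
  have hHo : |((EoutHi E χ v).card : ℝ) - (((k:ℝ)-(χ v:ℝ))/((k:ℝ)-1)) * (dOut E v : ℝ)|
      ≤ δ₀ * (dTot E v : ℝ) := by
    have : ((EoutHi E χ v).card : ℝ) - (((k:ℝ)-(χ v:ℝ))/((k:ℝ)-1)) * (dOut E v : ℝ)
        = -(((EoutLo E χ v).card : ℝ) - (((χ v:ℝ)-1)/((k:ℝ)-1)) * (dOut E v : ℝ)) := by
      have h2 : ((EoutHi E χ v).card : ℝ) = (dOut E v : ℝ) - ((EoutLo E χ v).card : ℝ) := by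
        linarith
      rw [h2]
      linear_combination (-(dOut E v : ℝ)) * hβγ
    rw [this, abs_neg]
    exact hLo
  clear hk hδ₀ hq hdeg hnoiso hV hA3 hsplit_in hsplit_out hrange h0notin hdInC0 hdOutC0
  clear hcard_Ico htri_in htri_out
  -- zbar facts
  set Sin : ℝ := ((EinLo E χ v).map (fun e => pos e.1)).sum with hSin
  set Sout : ℝ := ((EoutLo E χ v).map (fun e => pos e.2)).sum with hSout
  set z : ℝ := zbar E χ pos v with hzdef
  have hSin0 : 0 ≤ Sin := sum_map_nonneg _ _ (fun a _ => (hpos01 a.1).1)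
  have hSout0 : 0 ≤ Sout := sum_map_nonneg _ _ (fun a _ => (hpos01 a.2).1)
  have hSin1 : Sin ≤ ((EinLo E χ v).card : ℝ) := sum_map_le_card _ _ (fun a _ => (hpos01 a.1).2)
  have hSout1 : Sout ≤ ((EoutLo E χ v).card : ℝ) := sum_map_le_card _ _ (fun a _ => (hpos01 a.2).2)
  have hzL : z * (((EinLo E χ v).card : ℝ) + ((EoutLo E χ v).card : ℝ)) = Sin + Sout := by
    rw [hzdef, zbar]
    by_cases hL : (EinLo E χ v).card + (EoutLo E χ v).card = 0
    · rw [if_pos hL]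
      have h1 : (EinLo E χ v).card = 0 := by omega
      have h2 : (EoutLo E χ v).card = 0 := by omega
      have e1 : EinLo E χ v = 0 := Multiset.card_eq_zero.1 h1
      have e2 : EoutLo E χ v = 0 := Multiset.card_eq_zero.1 h2
      rw [hSin, hSout, e1, e2]
      simp
    · rw [if_neg hL]
      have hLpos : (0:ℝ) < (((EinLo E χ v).card + (EoutLo E χ v).card : ℕ) : ℝ) := by
        exact_mod_cast Nat.pos_of_ne_zero hL
      rw [← hSin, ← hSout]
      have hLne : ((EinLo E χ v).card : ℝ) + ((EoutLo E χ v).card : ℝ) ≠ 0 := by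
        have := Nat.pos_of_ne_zero hL
        have : (0:ℝ) < ((EinLo E χ v).card + (EoutLo E χ v).card : ℕ) := by exact_mod_cast this
        push_cast at this
        linarith
      push_cast
      rw [div_mul_cancel₀ _ hLne]
  have hz0 : 0 ≤ z := by
    rw [hzdef, zbar]
    by_cases hL : (EinLo E χ v).card + (EoutLo E χ v).card = 0
    · rw [if_pos hL]
    · rw [if_neg hL]
      have hLpos : (0:ℝ) < (((EinLo E χ v).card + (EoutLo E χ v).card : ℕ) : ℝ) := by
        exact_mod_cast Nat.pos_of_ne_zero hL
      exact div_nonneg (by rw [← hSin, ← hSout]; linarith) hLpos.le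
  have hz1 : z ≤ 1 := by
    rw [hzdef, zbar]
    by_cases hL : (EinLo E χ v).card + (EoutLo E χ v).card = 0
    · rw [if_pos hL]; norm_num
    · rw [if_neg hL]
      have hLpos : (0:ℝ) < (((EinLo E χ v).card + (EoutLo E χ v).card : ℕ) : ℝ) := by
        exact_mod_cast Nat.pos_of_ne_zero hL
      rw [div_le_one hLpos, ← hSin, ← hSout]
      push_cast
      linarith
  clear_value Sin Sout z
  -- the case split
  by_cases hvk : χ v = k
  · -- exact case: χ v = k
    have hhi_in : EinHi E χ v = 0 := by
      rw [EinHi, Multiset.filter_eq_nil]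
      rintro e he ⟨-, hgt⟩
      have := Finset.mem_Icc.1 (hχrange e.1)
      omega
    have hhi_out : EoutHi E χ v = 0 := by
      rw [EoutHi, Multiset.filter_eq_nil]
      rintro e he ⟨-, hgt⟩
      have := Finset.mem_Icc.1 (hχrange e.2)
      omega
    have hlo_in : EinLo E χ v = E.filter (fun e => e.2 = v) := by
      rw [EinLo]
      apply Multiset.filter_congr
      intro e he
      constructor
      · exact fun h => h.1
      · intro h
        refine ⟨h, ?_⟩
        have h1 := Finset.mem_Icc.1 (hχrange e.1)
        have h2 := hproper e he
        rw [h] at h2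
        omega
    have hlo_out : EoutLo E χ v = E.filter (fun e => e.1 = v) := by
      rw [EoutLo]
      apply Multiset.filter_congr
      intro e he
      constructor
      · exact fun h => h.1
      · intro h
        refine ⟨h, ?_⟩
        have h1 := Finset.mem_Icc.1 (hχrange e.2)
        have h2 := hproper e he
        rw [h] at h2
        omega
    have hLieq : ((EinLo E χ v).card : ℝ) = (dIn E v : ℝ) := by
      rw [hlo_in]; rfl
    have hLoeq : ((EoutLo E χ v).card : ℝ) = (dOut E v : ℝ) := by
      rw [hlo_out]; rfl
    have hyin : yIn E χ α v = α * ((EinLo E χ v).card : ℝ) := by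
      rw [yIn, hhi_in]
      simp only [Multiset.card_zero, Nat.cast_zero]
      exact max_eq_right (by positivity)
    have hyout : yOut E χ α v = α * ((EoutLo E χ v).card : ℝ) := by
      rw [yOut, hhi_out]
      simp only [Multiset.card_zero, Nat.cast_zero]
      exact max_eq_right (by positivity)
    have hsum1 : ((EoutLo E χ v).map (fun e => 1 - pos e.2)).sum
        = ((EoutLo E χ v).card : ℝ) - Sout := by
      rw [hSout]; exact sum_map_one_sub _ _
    have hzeq : z = (Sin + Sout) / (dTot E v : ℝ) := by
      have hL : (((EinLo E χ v).card : ℝ) + ((EoutLo E χ v).card : ℝ)) = (dTot E v : ℝ) := by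
        rw [hLieq, hLoeq, hDsum]
      rw [← hzL, hL]
      field_simp
    rw [hpos v, tpos, if_pos hvk, hyin, hyout, hsum1, hLieq, hLoeq, ← hSin, ← hzdef, hzeq]
    have harg : (α * (dOut E v : ℝ) + ((dOut E v : ℝ) - Sout) - Sin)
          / (α * (dIn E v : ℝ) + α * (dOut E v : ℝ))
        = (α + 1) / α * ((dOut E v : ℝ) / (dTot E v : ℝ))
          - (Sin + Sout) / (dTot E v : ℝ) / α := by
      rw [hDsum]
      have hd : (dIn E v : ℝ) + (dOut E v : ℝ) ≠ 0 := by rw [← hDsum]; positivity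
      exact harg_aux α _ _ _ _ (ne_of_gt hαpos) hd
    rw [harg, sub_self, abs_zero]
    exact mul_nonneg (mul_nonneg (by norm_num : (0:ℝ) ≤ 3) hδpos.le) (sq_nonneg _)
  · -- quantitative case: χ v < k
    have hcvk : χ v < k := lt_of_le_of_ne hck hvk
    have hcKR : (χ v : ℝ) + 1 ≤ (k:ℝ) := by exact_mod_cast hcvk
    have hcR1 : (1:ℝ) ≤ (χ v : ℝ) := by exact_mod_cast hc1
    set β : ℝ := ((χ v : ℝ) - 1)/((k:ℝ)-1) with hβdef
    set γ : ℝ := ((k:ℝ) - (χ v : ℝ))/((k:ℝ)-1) with hγdef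
    set DR : ℝ := ((dTot E v : ℕ) : ℝ) with hDRdef
    set diR : ℝ := ((dIn E v : ℕ) : ℝ) with hdiRdef
    set doR : ℝ := ((dOut E v : ℕ) : ℝ) with hdoRdef
    set LiR : ℝ := (((EinLo E χ v).card : ℕ) : ℝ) with hLiRdef
    set LoR : ℝ := (((EoutLo E χ v).card : ℕ) : ℝ) with hLoRdef
    set HiR : ℝ := (((EinHi E χ v).card : ℕ) : ℝ) with hHiRdef
    set HoR : ℝ := (((EoutHi E χ v).card : ℕ) : ℝ) with hHoRdef
    have hLiR0 : 0 ≤ LiR := by rw [hLiRdef]; exact Nat.cast_nonneg _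
    have hLoR0 : 0 ≤ LoR := by rw [hLoRdef]; exact Nat.cast_nonneg _
    have hHiR0 : 0 ≤ HiR := by rw [hHiRdef]; exact Nat.cast_nonneg _
    have hHoR0 : 0 ≤ HoR := by rw [hHoRdef]; exact Nat.cast_nonneg _
    clear_value DR diR doR LiR LoR HiR HoR
    have hβ0 : 0 ≤ β := by
      rw [hβdef]
      apply div_nonneg
      · linarith only [hcR1]
      · linarith only [hKm1pos]
    have hβ1 : β ≤ 1 := by
      rw [hβdef, div_le_one hKm1pos]; linarith only [hcKR]
    have hγ1 : γ ≤ 1 := by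
      rw [hγdef, div_le_one hKm1pos]; linarith only [hcR1]
    have hγε : ε^2 ≤ γ := by
      rw [hγdef, le_div_iff₀ hKm1pos]
      linarith only [hεkm1, hcKR]
    -- smallness of ε and δ₀
    have hεε : ε*ε ≤ 0.01*0.01 := by
      have t1 : ε*ε ≤ ε*0.01 := mul_le_mul_of_nonneg_left hε1 hε0.le
      have t2 : ε*0.01 ≤ 0.01*0.01 :=
        mul_le_mul_of_nonneg_right hε1 (by norm_num)
      linarith only [t1, t2]
    have hε2small : ε^2 ≤ (0.0001:ℝ) := by nlinarith only [hεε]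
    have hε2le1 : ε^2 ≤ 1 := by linarith only [hε2small]
    have hε12 : ε^12 ≤ (1:ℝ)/8 := by
      calc ε^12 ≤ (0.01:ℝ)^12 := by apply pow_le_pow_left₀ hε0.le hε1
        _ ≤ 1/8 := by norm_num
    have hδsmall : δ₀ ≤ (ε^2/8) * ε^2 := by
      have h3 : ε^2*ε^12 ≤ ε^2*(1/8) := mul_le_mul_of_nonneg_left hε12 (by positivity)
      have h4 : (ε^2*ε^12)*ε^2 ≤ (ε^2*(1/8))*ε^2 := mul_le_mul_of_nonneg_right h3 (by positivity)
      linarith only [hδ16, h4]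
    have hε2ε2 : ε^2*ε^2 ≤ 1*ε^2 := mul_le_mul_of_nonneg_right hε2le1 hε2pos.le
    have hδ8 : δ₀ ≤ ε^2/8 := by linarith only [hδsmall, hε2ε2]
    have hδDR : δ₀ * DR ≤ (ε^2/8) * diR := by
      have h1 : δ₀ * DR ≤ ((ε^2/8)*ε^2) * DR := mul_le_mul_of_nonneg_right hδsmall hDpos.le
      have h2 : ((ε^2/8)*ε^2) * DR = (ε^2/8)*(ε^2*DR) := by ring
      have h3 : (ε^2/8)*(ε^2*DR) ≤ (ε^2/8)*diR :=
        mul_le_mul_of_nonneg_left hA2in (by positivity)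
      linarith only [h1, h2, h3]
    have hδDRo : δ₀ * DR ≤ (ε^2/8) * doR := by
      have h1 : δ₀ * DR ≤ ((ε^2/8)*ε^2) * DR := mul_le_mul_of_nonneg_right hδsmall hDpos.le
      have h2 : ((ε^2/8)*ε^2) * DR = (ε^2/8)*(ε^2*DR) := by ring
      have h3 : (ε^2/8)*(ε^2*DR) ≤ (ε^2/8)*doR :=
        mul_le_mul_of_nonneg_left hA2out (by positivity)
      linarith only [h1, h2, h3]
    have hquarter : 2*(δ₀*DR) ≤ (1/4)*(ε^2*DR) := by
      have h1 : δ₀*DR ≤ (ε^2/8)*DR := mul_le_mul_of_nonneg_right hδ8 hDpos.le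
      linarith only [h1]
    -- y_in = Hi, y_out = Ho
    have hLile : LiR ≤ diR := by linarith only [hcin, hHiR0]
    have hLole : LoR ≤ doR := by linarith only [hcout, hHoR0]
    have hHilb : γ * diR - δ₀ * DR ≤ HiR := by
      have h := (abs_le.1 hHi).1; linarith only [h]
    have hHolb : γ * doR - δ₀ * DR ≤ HoR := by
      have h := (abs_le.1 hHo).1; linarith only [h]
    have hε4le : ε^4 ≤ ε^2/4 := by nlinarith only [hε2small, hε2pos]
    have hyin : yIn E χ α v = HiR := by
      rw [yIn, ← hHiRdef, ← hLiRdef]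
      apply max_eq_left
      have h1 : α * LiR ≤ ε^4 * diR := by
        rw [hα]; exact mul_le_mul_of_nonneg_left hLile (by positivity)
      have h4 : ε^4 * diR ≤ (ε^2/4) * diR := mul_le_mul_of_nonneg_right hε4le hdin0
      have h5 : ε^2 * diR ≤ γ * diR := mul_le_mul_of_nonneg_right hγε hdin0
      have h6 : 0 ≤ ε^2*diR := mul_nonneg hε2pos.le hdin0
      linarith only [h1, h4, h5, hHilb, hδDR, h6]
    have hyout : yOut E χ α v = HoR := by
      rw [yOut, ← hHoRdef, ← hLoRdef]
      apply max_eq_left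
      have h1 : α * LoR ≤ ε^4 * doR := by
        rw [hα]; exact mul_le_mul_of_nonneg_left hLole (by positivity)
      have h4 : ε^4 * doR ≤ (ε^2/4) * doR := mul_le_mul_of_nonneg_right hε4le hdout0
      have h5 : ε^2 * doR ≤ γ * doR := mul_le_mul_of_nonneg_right hγε hdout0
      have h6 : 0 ≤ ε^2*doR := mul_nonneg hε2pos.le hdout0
      linarith only [h1, h4, h5, hHolb, hδDRo, h6]
    -- the main quantities
    set N : ℝ := HoR + (LoR - Sout) - Sin with hNdef
    set Ns : ℝ := doR - β * z * DR with hNsdef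
    set Dn : ℝ := HiR + HoR with hDndef
    set Ds : ℝ := γ * DR with hDsdef
    clear_value N Ns Dn Ds
    -- estimates
    have hDnDs : |Dn - Ds| ≤ 2 * (δ₀ * DR) := by
      have heq : Dn - Ds = (HiR - γ*diR) + (HoR - γ*doR) := by
        rw [hDndef, hDsdef]
        linear_combination (-γ) * hDsum
      rw [heq]
      calc |(HiR - γ*diR) + (HoR - γ*doR)| ≤ |HiR - γ*diR| + |HoR - γ*doR| := abs_add_le _ _
        _ ≤ 2 * (δ₀ * DR) := by linarith only [hHi, hHo]
    have hSest : |(Sin + Sout) - β * z * DR| ≤ 2 * (δ₀ * DR) := by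
      have heq : (Sin + Sout) - β * z * DR = z*((LiR - β*diR) + (LoR - β*doR)) := by
        linear_combination (-1) * hzL - z*β*hDsum
      rw [heq, abs_mul]
      have h1 : |(LiR - β*diR) + (LoR - β*doR)| ≤ 2*(δ₀*DR) := by
        calc |(LiR - β*diR) + (LoR - β*doR)| ≤ |LiR - β*diR| + |LoR - β*doR| := abs_add_le _ _
          _ ≤ 2*(δ₀*DR) := by linarith only [hLi, hLo]
      have hz' : |z| ≤ 1 := abs_le.2 ⟨by linarith only [hz0], hz1⟩
      calc |z| * |(LiR - β*diR) + (LoR - β*doR)| ≤ 1 * (2*(δ₀*DR)) := by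
            apply mul_le_mul hz' h1 (abs_nonneg _) (by norm_num)
        _ = 2*(δ₀*DR) := by ring
    have hβγd : γ*doR + β*doR = doR := by linear_combination doR * hβγ
    have hNest : |N - Ns| ≤ 4 * (δ₀ * DR) := by
      have heq : N - Ns = (HoR - γ*doR) + (LoR - β*doR) - ((Sin + Sout) - β*z*DR) := by
        rw [hNdef, hNsdef]
        linear_combination hβγd
      rw [heq]
      calc |(HoR - γ*doR) + (LoR - β*doR) - ((Sin + Sout) - β*z*DR)|
          ≤ |(HoR - γ*doR) + (LoR - β*doR)| + |(Sin + Sout) - β*z*DR| := abs_sub _ _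
        _ ≤ (|HoR - γ*doR| + |LoR - β*doR|) + 2*(δ₀*DR) := by
            linarith only [abs_add_le (HoR - γ*doR) (LoR - β*doR), hSest]
        _ ≤ 4 * (δ₀ * DR) := by linarith only [hHo, hLo]
    -- positivity of denominators
    have hDs_lb : ε^2 * DR ≤ Ds := by
      rw [hDsdef]; exact mul_le_mul_of_nonneg_right hγε hDpos.le
    have hDspos : 0 < Ds := lt_of_lt_of_le (mul_pos hε2pos hDpos) hDs_lb
    have hDn_lb : (3/4) * (ε^2 * DR) ≤ Dn := by
      have h1 : -(2*(δ₀*DR)) ≤ Dn - Ds := by linarith only [(abs_le.1 hDnDs).1]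
      linarith only [h1, hDs_lb, hquarter]
    have hDnpos : 0 < Dn :=
      lt_of_lt_of_le (by positivity) hDn_lb
    have hNs_abs : |Ns| ≤ DR := by
      rw [hNsdef]
      have hdoDR : doR ≤ DR := by linarith only [hdin0, hDsum]
      have h1 : 0 ≤ β*z*DR := mul_nonneg (mul_nonneg hβ0 hz0) hDpos.le
      have hbz : β*z ≤ 1 := mul_le_one₀ hβ1 hz0 hz1
      have h2 : β*z*DR ≤ DR := by
        have h3 : (β*z)*DR ≤ 1*DR := mul_le_mul_of_nonneg_right hbz hDpos.le
        linarith only [h3]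
      rw [abs_le]
      constructor
      · linarith only [hdout0, h2]
      · linarith only [hdoDR, h1]
    -- rewrite the goal
    rw [hpos v, tpos, if_neg hvk, hyin, hyout, ← hSin, ← hzdef, ← hdoRdef, ← hDRdef]
    have hsum1 : ((EoutLo E χ v).map (fun e => 1 - pos e.2)).sum = LoR - Sout := by
      rw [hSout, hLoRdef]; exact sum_map_one_sub _ _
    rw [hsum1, ← hNdef, ← hDndef]
    refine le_trans (clamp_lip _ _) ?_
    have hT : ((k:ℝ) - 1) / ((k:ℝ) - (χ v:ℝ)) * (doR / DR) - ((χ v:ℝ) - 1)/((k:ℝ) - (χ v:ℝ)) * z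
        = Ns / Ds := by
      rw [hNsdef, hDsdef, hγdef, hβdef]
      exact tpos_aux (k:ℝ) (χ v : ℝ) z doR DR hcKR (by linarith only [hKm1pos]) hDpos
    rw [hT]
    have hfrac : N / Dn - Ns / Ds = (N - Ns)/Dn + Ns*(Ds - Dn)/(Dn*Ds) :=
      frac_aux N Ns Dn Ds (ne_of_gt hDnpos) (ne_of_gt hDspos)
    rw [hfrac]
    have hδDR0 : (0:ℝ) ≤ δ₀*DR := mul_nonneg hδpos.le hDpos.le
    have ht1 : |(N - Ns)/Dn| ≤ (4*(δ₀*DR)) / ((3/4)*(ε^2*DR)) := by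
      rw [abs_div, abs_of_pos hDnpos]
      exact div_le_div₀ (by linarith only [hδDR0]) hNest (by positivity) hDn_lb
    have ht2 : |Ns*(Ds - Dn)/(Dn*Ds)| ≤ (DR*(2*(δ₀*DR))) / (((3/4)*(ε^2*DR))*(ε^2*DR)) := by
      rw [abs_div, abs_mul, abs_of_pos (mul_pos hDnpos hDspos)]
      apply div_le_div₀
      · exact mul_nonneg hDpos.le (by linarith only [hδDR0])
      · apply mul_le_mul hNs_abs (by rw [abs_sub_comm]; exact hDnDs) (abs_nonneg _) hDpos.le
      · positivity
      · exact mul_le_mul hDn_lb hDs_lb (mul_pos hε2pos hDpos).le hDnpos.le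
    have hDRne : DR ≠ 0 := ne_of_gt hDpos
    have hεne : ε ≠ 0 := ne_of_gt hε0
    have hs1 : (4*(δ₀*DR)) / ((3/4)*(ε^2*DR)) = (16/3) * (δ₀/ε^2) := by
      field_simp
      ring
    have hs2 : (DR*(2*(δ₀*DR))) / (((3/4)*(ε^2*DR))*(ε^2*DR)) = (8/3) * (δ₀/ε^4) := by
      field_simp
      ring
    have hε2k : (1:ℝ) ≤ ε^2 * (k:ℝ) := by
      have h := hkge
      rw [div_le_iff₀ hε2pos] at h
      linarith only [h]
    have hinv4 : 1/ε^4 ≤ ((k:ℝ))^2 := by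
      rw [div_le_iff₀ (by positivity : (0:ℝ) < ε^4)]
      have h := mul_le_mul hε2k hε2k (by norm_num) (by positivity : (0:ℝ) ≤ ε^2*(k:ℝ))
      nlinarith only [h]
    have hA : δ₀/ε^4 ≤ δ₀*((k:ℝ))^2 := by
      calc δ₀/ε^4 = δ₀*(1/ε^4) := by ring
        _ ≤ δ₀*((k:ℝ))^2 := mul_le_mul_of_nonneg_left hinv4 hδpos.le
    have hB : δ₀/ε^2 ≤ δ₀*((k:ℝ))^2 * ε^2 := by
      have h1 : δ₀/ε^2 = (δ₀/ε^4)*ε^2 := by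
        field_simp
      calc δ₀/ε^2 = (δ₀/ε^4)*ε^2 := h1
        _ ≤ (δ₀*((k:ℝ))^2)*ε^2 := mul_le_mul_of_nonneg_right hA (by positivity)
    have hδk0 : 0 ≤ δ₀*((k:ℝ))^2 := mul_nonneg hδpos.le (sq_nonneg _)
    have hδkε : δ₀*((k:ℝ))^2*ε^2 ≤ δ₀*((k:ℝ))^2*(0.0001:ℝ) :=
      mul_le_mul_of_nonneg_left hε2small hδk0
    calc |(N - Ns)/Dn + Ns*(Ds - Dn)/(Dn*Ds)|
        ≤ |(N - Ns)/Dn| + |Ns*(Ds - Dn)/(Dn*Ds)| := abs_add_le _ _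
      _ ≤ (16/3) * (δ₀/ε^2) + (8/3) * (δ₀/ε^4) := by
          rw [hs1] at ht1; rw [hs2] at ht2; linarith only [ht1, ht2]
      _ ≤ (16/3) * (δ₀*((k:ℝ))^2*ε^2) + (8/3) * (δ₀*((k:ℝ))^2) := by
          linarith only [hA, hB]
      _ ≤ 3 * δ₀ * (k:ℝ)^2 := by linarith only [hδk0, hδkε]
end
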